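/- Let d ≥ 1 be an integer and let K : ℤ^d → ℝ be absolutely summable, i.e., ∑_{z ∈ ℤ^d} |K(z)| < ∞. Then for every continuous compactly supported function V : ℝ^d → ℝ, lim_{N→∞} N^{−d} ∑_{x,x' ∈ ℤ^d} V(x/N) K(x − x') V(x'/N) = ( ∑_{z ∈ ℤ^d} K(z) ) ∫_{ℝ^d} V(y)² dy. -/

import Mathlib

open MeasureTheory Filter Topology

namespace Stmt13Aux

noncomputable def pt (d N : ℕ) (x : Fin d → ℤ) : Fin d → ℝ := fun i => (x i : ℝ) / N

variable {d : ℕ}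

lemma support_finite (f : (Fin d → ℝ) → ℝ) (hfc : HasCompactSupport f) {N : ℕ} (hN : 1 ≤ N) :
    (Function.support fun v : Fin d → ℤ => f (pt d N v)).Finite := by
  obtain ⟨R, hR⟩ := hfc.isBounded.subset_closedBall 0
  set M : ℤ := ⌈R * N⌉ with hM
  apply Set.Finite.subset (Set.Finite.pi (fun _ : Fin d => Set.finite_Icc (-M) M))
  intro v hv
  have hmem : pt d N v ∈ tsupport f := subset_tsupport f hv
  have hnorm : ‖pt d N v‖ ≤ R := by
    have := hR hmem
    simpa [Metric.mem_closedBall] using this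
  have hN0 : (0:ℝ) < N := by exact_mod_cast hN
  intro i _
  have h1 : |(v i : ℝ) / N| ≤ R := (norm_le_pi_norm (pt d N v) i).trans hnorm
  have h2 : |(v i : ℝ)| ≤ R * N := by
    rw [abs_div, abs_of_pos hN0] at h1
    calc |(v i : ℝ)| = |(v i : ℝ)| / N * N := by field_simp
    _ ≤ R * N := by nlinarith
  have h3 : (v i : ℝ) ≤ M := le_trans (le_of_abs_le h2) (Int.le_ceil _)
  have h4 : (-M : ℝ) ≤ v i := by
    have := neg_abs_le (v i : ℝ)
    have h5 : -(R * N) ≤ (v i : ℝ) := by linarith [abs_le.1 h2]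
    have h6 := Int.le_ceil (R * N)
    push_cast
    linarith
  refine Set.mem_Icc.2 ⟨?_, ?_⟩
  · exact_mod_cast h4
  · exact_mod_cast h3


def cube (d N : ℕ) (v : Fin d → ℤ) : Set (Fin d → ℝ) :=
  Set.univ.pi fun i => Set.Ico ((v i : ℝ) / N) (((v i : ℝ) + 1) / N)

lemma mem_cube_iff {N : ℕ} (hN : 1 ≤ N) (v : Fin d → ℤ) (y : Fin d → ℝ) :
    y ∈ cube d N v ↔ ∀ i, ⌊(N : ℝ) * y i⌋ = v i := by
  have hN0 : (0:ℝ) < N := by exact_mod_cast hN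
  simp only [cube, Set.mem_pi, Set.mem_univ, forall_true_left, Set.mem_Ico]
  refine forall_congr' fun i => ?_
  rw [Int.floor_eq_iff, div_le_iff₀ hN0, lt_div_iff₀ hN0]
  constructor
  · rintro ⟨h1, h2⟩
    constructor <;> nlinarith [mul_comm (y i) ((N:ℝ))]
  · rintro ⟨h1, h2⟩
    constructor <;> push_cast <;> nlinarith [mul_comm (y i) ((N:ℝ))]

lemma measurableSet_cube (d N : ℕ) (v : Fin d → ℤ) : MeasurableSet (cube d N v) :=
  MeasurableSet.univ_pi fun _ => measurableSet_Ico

lemma volume_cube (d : ℕ) {N : ℕ} (hN : 1 ≤ N) (v : Fin d → ℤ) :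
    volume (cube d N v) = ENNReal.ofReal ((1 : ℝ) / N) ^ d := by
  have : volume (cube d N v) = ∏ i : Fin d, volume (Set.Ico ((v i : ℝ) / N) (((v i : ℝ) + 1) / N)) :=
    volume_pi_pi _
  rw [this]
  have : ∀ i : Fin d, volume (Set.Ico ((v i : ℝ) / N) (((v i : ℝ) + 1) / N))
      = ENNReal.ofReal ((1:ℝ)/N) := by
    intro i
    rw [Real.volume_Ico]
    congr 1
    field_simp; ring
  simp [this]


lemma integral_step (f : (Fin d → ℝ) → ℝ) (hfc : HasCompactSupport f)
    {N : ℕ} (hN : 1 ≤ N) :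
    ∫ y : Fin d → ℝ, f (fun i => (⌊(N:ℝ) * y i⌋ : ℝ) / N)
      = (1/(N:ℝ)^d) * ∑' v : Fin d → ℤ, f (pt d N v) := by
  classical
  set F : Finset (Fin d → ℤ) := (support_finite f hfc hN).toFinset with hF
  have hFmem : ∀ v : Fin d → ℤ, v ∈ F ↔ f (pt d N v) ≠ 0 := by
    intro v
    simp [hF, Set.Finite.mem_toFinset, Function.mem_support]
  have key : ∀ y : Fin d → ℝ, f (fun i => (⌊(N:ℝ) * y i⌋ : ℝ) / N)
      = ∑ v ∈ F, Set.indicator (cube d N v) (fun _ => f (pt d N v)) y := by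
    intro y
    set w : Fin d → ℤ := fun i => ⌊(N:ℝ) * y i⌋ with hw
    have hyw : y ∈ cube d N w := (mem_cube_iff hN w y).2 fun i => rfl
    have hval : f (fun i => (⌊(N:ℝ) * y i⌋ : ℝ) / N) = f (pt d N w) := rfl
    rw [hval]
    rw [Finset.sum_eq_single w]
    · rw [Set.indicator_of_mem hyw]
    · intro v hv hvw
      apply Set.indicator_of_notMem
      intro hyv
      exact hvw (funext fun i => ((mem_cube_iff hN v y).1 hyv i).symm)
    · intro hwF
      rw [Set.indicator_of_mem hyw]
      by_contra h
      exact hwF ((hFmem w).2 h)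
  have hvol : ∀ v : Fin d → ℤ, (volume (cube d N v)).toReal = (1/(N:ℝ))^d := by
    intro v
    rw [volume_cube d hN v, ENNReal.toReal_pow, ENNReal.toReal_ofReal (by positivity)]
  have hint : ∀ v : Fin d → ℤ, Integrable
      (Set.indicator (cube d N v) (fun _ => f (pt d N v))) := by
    intro v
    rw [integrable_indicator_iff (measurableSet_cube d N v)]
    refine integrableOn_const ?_
    rw [volume_cube d hN v]
    exact (ENNReal.pow_lt_top ENNReal.ofReal_lt_top).ne
  calc ∫ y : Fin d → ℝ, f (fun i => (⌊(N:ℝ) * y i⌋ : ℝ) / N)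
      = ∫ y : Fin d → ℝ, ∑ v ∈ F, Set.indicator (cube d N v) (fun _ => f (pt d N v)) y := by
        exact congrArg _ (funext key)
    _ = ∑ v ∈ F, ∫ y : Fin d → ℝ, Set.indicator (cube d N v) (fun _ => f (pt d N v)) y :=
        integral_finset_sum F fun v _ => hint v
    _ = ∑ v ∈ F, (1/(N:ℝ))^d * f (pt d N v) := by
        refine Finset.sum_congr rfl fun v _ => ?_
        rw [integral_indicator_const _ (measurableSet_cube d N v), smul_eq_mul, measureReal_def, hvol v]
    _ = (1/(N:ℝ)^d) * ∑ v ∈ F, f (pt d N v) := by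
        rw [← Finset.mul_sum, one_div, one_div, inv_pow]
    _ = (1/(N:ℝ)^d) * ∑' v : Fin d → ℤ, f (pt d N v) := by
        congr 1
        exact (tsum_eq_sum fun v hv => by
          by_contra h
          exact hv ((hFmem v).2 h)).symm


lemma step_tendsto (y : Fin d → ℝ) :
    Tendsto (fun N : ℕ => (fun i => (⌊(N:ℝ) * y i⌋ : ℝ) / N)) atTop (𝓝 y) := by
  rw [tendsto_pi_nhds]
  intro i
  have hupper : ∀ᶠ N : ℕ in atTop, (⌊(N:ℝ) * y i⌋ : ℝ) / N ≤ y i := by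
    filter_upwards [eventually_ge_atTop 1] with N hN
    have hN0 : (0:ℝ) < N := by exact_mod_cast hN
    rw [div_le_iff₀ hN0]
    have := Int.floor_le ((N:ℝ) * y i)
    nlinarith [mul_comm (y i) ((N:ℝ))]
  have hlower : ∀ᶠ N : ℕ in atTop, y i - 1 / N ≤ (⌊(N:ℝ) * y i⌋ : ℝ) / N := by
    filter_upwards [eventually_ge_atTop 1] with N hN
    have hN0 : (0:ℝ) < N := by exact_mod_cast hN
    rw [sub_le_iff_le_add, ← add_div, le_div_iff₀ hN0]
    have := Int.lt_floor_add_one ((N:ℝ) * y i)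
    nlinarith [mul_comm (y i) ((N:ℝ))]
  have h1 : Tendsto (fun N : ℕ => y i - 1 / (N:ℝ)) atTop (𝓝 (y i)) := by
    simpa using tendsto_one_div_atTop_nhds_zero_nat.const_sub (y i)
  exact tendsto_of_tendsto_of_tendsto_of_le_of_le' h1 tendsto_const_nhds hlower hupper

lemma riemann (f : (Fin d → ℝ) → ℝ) (hf : Continuous f) (hfc : HasCompactSupport f) :
    Tendsto (fun N : ℕ => (1/(N:ℝ)^d) * ∑' v : Fin d → ℤ, f (pt d N v)) atTop
      (𝓝 (∫ y : Fin d → ℝ, f y)) := by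
  obtain ⟨C, hC⟩ := hfc.exists_bound_of_continuous hf
  have hC0 : 0 ≤ C := le_trans (norm_nonneg _) (hC 0)
  set B : Set (Fin d → ℝ) := Metric.cthickening 1 (tsupport f) with hB
  have hBc : IsCompact B := hfc.cthickening
  have hBm : MeasurableSet B := Metric.isClosed_cthickening.measurableSet
  set bound : (Fin d → ℝ) → ℝ := B.indicator fun _ => C with hbd
  have hmeas : ∀ N : ℕ, AEStronglyMeasurable
      (fun y : Fin d → ℝ => f (fun i => (⌊(N:ℝ) * y i⌋ : ℝ) / N)) volume := by
    intro N
    apply Continuous.comp_aestronglyMeasurable hf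
    apply Measurable.aestronglyMeasurable
    apply measurable_pi_lambda
    intro i
    exact (Measurable.comp (measurable_from_top)
      ((measurable_const.mul (measurable_pi_apply i)).floor)).div_const _
  have hbound_int : Integrable bound := by
    rw [hbd, integrable_indicator_iff hBm]
    exact integrableOn_const hBc.measure_lt_top.ne
  have h_bound : ∀ᶠ N : ℕ in atTop, ∀ᵐ y : Fin d → ℝ, ‖f (fun i => (⌊(N:ℝ) * y i⌋ : ℝ) / N)‖ ≤ bound y := by
    filter_upwards [eventually_ge_atTop 1] with N hN
    apply Filter.Eventually.of_forall
    intro y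
    have hN0 : (0:ℝ) < N := by exact_mod_cast hN
    by_cases h : f (fun i => (⌊(N:ℝ) * y i⌋ : ℝ) / N) = 0
    · rw [h, norm_zero]
      exact Set.indicator_apply_nonneg fun _ => hC0
    · have hw : (fun i => (⌊(N:ℝ) * y i⌋ : ℝ) / N) ∈ tsupport f :=
        subset_tsupport f h
      have hyB : y ∈ B := by
        refine Metric.mem_cthickening_of_dist_le y _ 1 _ hw ?_
        · rw [dist_pi_le_iff zero_le_one]
          intro i
          rw [Real.dist_eq]
          have hfl := Int.floor_le ((N:ℝ) * y i)
          have hfl2 := Int.lt_floor_add_one ((N:ℝ) * y i)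
          have ha : (⌊(N:ℝ) * y i⌋ : ℝ) / N ≤ y i := by
            rw [div_le_iff₀ hN0]
            nlinarith [mul_comm (y i) ((N:ℝ))]
          have hb : y i - 1 / N ≤ (⌊(N:ℝ) * y i⌋ : ℝ) / N := by
            rw [sub_le_iff_le_add, ← add_div, le_div_iff₀ hN0]
            nlinarith [mul_comm (y i) ((N:ℝ))]
          have e1 : |y i - (⌊(N:ℝ) * y i⌋ : ℝ) / N| ≤ 1 / N :=
            abs_le.2 ⟨by linarith, by linarith⟩
          have : (1:ℝ)/N ≤ 1 := by
            rw [div_le_one hN0]; exact_mod_cast hN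
          linarith
      rw [hbd, Set.indicator_of_mem hyB]
      exact hC _
  have h_lim : ∀ y : Fin d → ℝ, Tendsto
      (fun N : ℕ => f (fun i => (⌊(N:ℝ) * y i⌋ : ℝ) / N)) atTop (𝓝 (f y)) :=
    fun y => (hf.tendsto y).comp (step_tendsto y)
  have hDCT := tendsto_integral_filter_of_dominated_convergence bound
    (Filter.Eventually.of_forall hmeas) h_bound hbound_int
    (Filter.Eventually.of_forall h_lim)
  apply hDCT.congr'
  filter_upwards [eventually_ge_atTop 1] with N hN
  exact integral_step f hfc hN


lemma exists_finsupp (g : (Fin d → ℝ) → ℝ) (hgc : HasCompactSupport g) {N : ℕ} (hN : 1 ≤ N) :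
    ∃ s : Finset (Fin d → ℤ), ∀ x ∉ s, g (pt d N x) = 0 := by
  refine ⟨(support_finite g hgc hN).toFinset, fun x hx => ?_⟩
  by_contra h
  exact hx ((Set.Finite.mem_toFinset _).2 h)

end Stmt13Aux

open Stmt13Aux

/-- The point `x/N ∈ ℝ^d` associated to a lattice point `x ∈ ℤ^d`. -/
noncomputable def latE (d N : ℕ) (x : Fin d → ℤ) : EuclideanSpace ℝ (Fin d) :=
  WithLp.toLp 2 fun i => (x i : ℝ) / N

set_option maxHeartbeats 1000000 in
theorem stmt13 (d : ℕ) (hd : 1 ≤ d) (K : (Fin d → ℤ) → ℝ)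
    (hK : Summable fun z => |K z|)
    (V : EuclideanSpace ℝ (Fin d) → ℝ) (hV : Continuous V)
    (hVc : HasCompactSupport V) :
    Tendsto (fun N : ℕ =>
        (1 / (N : ℝ) ^ d) *
          ∑' p : (Fin d → ℤ) × (Fin d → ℤ),
            V (latE d N p.1) * K (p.1 - p.2) * V (latE d N p.2))
      atTop (𝓝 ((∑' z, K z) * ∫ y, V y ^ 2)) := by
  classical
  set L := (PiLp.continuousLinearEquiv 2 ℝ (fun _ : Fin d => ℝ)).symm with hL
  set g : (Fin d → ℝ) → ℝ := fun y => V (L y) with hgdef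
  have hg : Continuous g := hV.comp L.continuous
  have hgc : HasCompactSupport g := hVc.comp_homeomorph L.toHomeomorph
  obtain ⟨C, hC⟩ := hgc.exists_bound_of_continuous hg
  have hC0 : 0 ≤ C := le_trans (norm_nonneg _) (hC 0)
  -- the integral identity
  have hI : ∫ y : Fin d → ℝ, g y ^ 2 = ∫ y : EuclideanSpace ℝ (Fin d), V y ^ 2 := by
    exact ((EuclideanSpace.volume_preserving_symm_measurableEquiv_toLp (Fin d)).symm
        ).integral_comp
      (MeasurableEquiv.measurableEmbedding _) (fun y : EuclideanSpace ℝ (Fin d) => V y ^ 2)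
  -- abs and square versions
  have hgabs : HasCompactSupport (fun y : Fin d → ℝ => |g y|) :=
    hgc.comp_left (g := fun t : ℝ => |t|) abs_zero
  have hgsq : HasCompactSupport (fun y : Fin d → ℝ => g y ^ 2) :=
    hgc.comp_left (g := fun t : ℝ => t ^ 2) (by simp)
  -- Riemann sums
  have hQ : Tendsto (fun N : ℕ => (1/(N:ℝ)^d) * ∑' v : Fin d → ℤ, |g (pt d N v)|) atTop
      (𝓝 (∫ y : Fin d → ℝ, |g y|)) := riemann _ hg.abs hgabs
  have hR2 : Tendsto (fun N : ℕ => (1/(N:ℝ)^d) * ∑' v : Fin d → ℤ, g (pt d N v) ^ 2) atTop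
      (𝓝 (∫ y : Fin d → ℝ, g y ^ 2)) := riemann _ (hg.pow 2) hgsq
  set M : ℝ := (∫ y : Fin d → ℝ, |g y|) + 1 with hM
  have hM0 : 0 < M := by
    have : 0 ≤ ∫ y : Fin d → ℝ, |g y| := integral_nonneg fun y => abs_nonneg _
    linarith
  have hQM : ∀ᶠ N : ℕ in atTop,
      (1/(N:ℝ)^d) * ∑' v : Fin d → ℤ, |g (pt d N v)| < M :=
    hQ.eventually_lt_const (by linarith)
  set A : ℕ → (Fin d → ℤ) → ℝ :=
    fun N z => ∑' x : Fin d → ℤ, g (pt d N x) * g (pt d N (x - z)) with hA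
  -- pointwise shift identity
  have hshift : ∀ (N : ℕ) (x z : Fin d → ℤ), pt d N (x - z) = pt d N x - pt d N z := by
    intro N x z
    funext i
    simp only [pt, Pi.sub_apply]
    push_cast
    ring
  -- per-z convergence of (1/N^d) A N z
  have hAz : ∀ z : Fin d → ℤ, Tendsto (fun N : ℕ => (1/(N:ℝ)^d) * A N z) atTop
      (𝓝 (∫ y : Fin d → ℝ, g y ^ 2)) := by
    intro z
    have hdiff : Tendsto (fun N : ℕ =>
        (1/(N:ℝ)^d) * A N z - (1/(N:ℝ)^d) * ∑' v : Fin d → ℤ, g (pt d N v) ^ 2) atTop (𝓝 0) := by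
      rw [NormedAddCommGroup.tendsto_nhds_zero]
      intro ε hε
      set ε' : ℝ := ε / (2 * M) with hε'
      have hε'0 : 0 < ε' := by positivity
      obtain ⟨δ, hδ0, hδ⟩ := Metric.uniformContinuous_iff.1
        (hgc.uniformContinuous_of_continuous hg) ε' hε'0
      have hzsmall : ∀ᶠ N : ℕ in atTop, ‖pt d N z‖ < δ := by
        have ht : Tendsto (fun N : ℕ => ‖pt d N z‖) atTop (𝓝 0) := by
          have heq : ∀ N : ℕ, ‖pt d N z‖ = (1/(N:ℝ)) * ‖(fun i => (z i : ℝ))‖ := by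
            intro N
            have : pt d N z = (1/(N:ℝ)) • (fun i => (z i : ℝ)) := by
              funext i
              simp [pt, div_eq_inv_mul]
            rw [this, norm_smul]
            simp
          simp only [heq]
          simpa using tendsto_one_div_atTop_nhds_zero_nat.mul_const ‖(fun i => (z i : ℝ))‖
        exact ht.eventually_lt_const hδ0
      filter_upwards [hQM, hzsmall, eventually_ge_atTop 1] with N hQN hzN hN1
      obtain ⟨F, hF⟩ := exists_finsupp g hgc hN1
      have hsum1 : Summable fun x : Fin d → ℤ => g (pt d N x) * g (pt d N (x - z)) :=
        summable_of_ne_finset_zero (s := F) fun x hx => by rw [hF x hx, zero_mul]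
      have hsum2 : Summable fun x : Fin d → ℤ => g (pt d N x) ^ 2 :=
        summable_of_ne_finset_zero (s := F) fun x hx => by rw [hF x hx]; ring
      have hsumabs : Summable fun x : Fin d → ℤ => |g (pt d N x)| :=
        summable_of_ne_finset_zero (s := F) fun x hx => by rw [hF x hx, abs_zero]
      have hNd : (0:ℝ) < (N:ℝ)^d := by
        have : (0:ℝ) < N := by exact_mod_cast hN1
        positivity
      rw [← mul_sub, ← Summable.tsum_sub hsum1 hsum2]
      have hterm : ∀ x : Fin d → ℤ,
          |g (pt d N x) * g (pt d N (x - z)) - g (pt d N x) ^ 2| ≤ |g (pt d N x)| * ε' := by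
        intro x
        have he : g (pt d N x) * g (pt d N (x - z)) - g (pt d N x) ^ 2
            = g (pt d N x) * (g (pt d N (x - z)) - g (pt d N x)) := by ring
        rw [he, abs_mul]
        apply mul_le_mul_of_nonneg_left _ (abs_nonneg _)
        have hdist : dist (pt d N (x - z)) (pt d N x) < δ := by
          rw [dist_eq_norm, hshift N x z]
          simpa using hzN
        exact le_of_lt (by simpa [Real.dist_eq] using hδ hdist)
      have hsnorm : Summable fun x : Fin d → ℤ =>
          |g (pt d N x) * g (pt d N (x - z)) - g (pt d N x) ^ 2| :=
        Summable.of_nonneg_of_le (fun x => abs_nonneg _) hterm (hsumabs.mul_right ε')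
      have hbnd : |∑' x : Fin d → ℤ, (g (pt d N x) * g (pt d N (x - z)) - g (pt d N x) ^ 2)|
          ≤ (∑' x : Fin d → ℤ, |g (pt d N x)|) * ε' := by
        have h0 := norm_tsum_le_tsum_norm
          (f := fun x : Fin d → ℤ => g (pt d N x) * g (pt d N (x - z)) - g (pt d N x) ^ 2)
          (by simpa only [Real.norm_eq_abs] using hsnorm)
        simp only [Real.norm_eq_abs] at h0
        calc |∑' x : Fin d → ℤ, (g (pt d N x) * g (pt d N (x - z)) - g (pt d N x) ^ 2)|
            ≤ ∑' x : Fin d → ℤ, |g (pt d N x) * g (pt d N (x - z)) - g (pt d N x) ^ 2| := h0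
          _ ≤ ∑' x : Fin d → ℤ, |g (pt d N x)| * ε' :=
              Summable.tsum_le_tsum hterm hsnorm (hsumabs.mul_right ε')
          _ = (∑' x : Fin d → ℤ, |g (pt d N x)|) * ε' := tsum_mul_right
      rw [Real.norm_eq_abs, abs_mul, abs_of_pos (show (0:ℝ) < 1/(N:ℝ)^d by positivity)]
      calc 1/(N:ℝ)^d * |∑' x : Fin d → ℤ,
            (g (pt d N x) * g (pt d N (x - z)) - g (pt d N x) ^ 2)|
          ≤ 1/(N:ℝ)^d * ((∑' x : Fin d → ℤ, |g (pt d N x)|) * ε') :=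
            mul_le_mul_of_nonneg_left hbnd (by positivity)
        _ = (1/(N:ℝ)^d * ∑' x : Fin d → ℤ, |g (pt d N x)|) * ε' := by ring
        _ ≤ M * ε' := mul_le_mul_of_nonneg_right (le_of_lt hQN) (le_of_lt hε'0)
        _ = ε / 2 := by rw [hε']; field_simp
        _ < ε := by linarith
    have hadd := hdiff.add hR2
    simp only [sub_add_cancel, zero_add] at hadd
    exact hadd
  -- dominated convergence over z
  have hFz : ∀ z : Fin d → ℤ, Tendsto (fun N : ℕ => K z * ((1/(N:ℝ)^d) * A N z)) atTop
      (𝓝 (K z * ∫ y : Fin d → ℝ, g y ^ 2)) := fun z => (hAz z).const_mul (K z)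
  have hbound : ∀ᶠ N : ℕ in atTop, ∀ z : Fin d → ℤ,
      ‖K z * ((1/(N:ℝ)^d) * A N z)‖ ≤ |K z| * (C * M) := by
    filter_upwards [hQM, eventually_ge_atTop 1] with N hQN hN1
    intro z
    obtain ⟨F, hF⟩ := exists_finsupp g hgc hN1
    have hsumabs : Summable fun x : Fin d → ℤ => |g (pt d N x)| :=
      summable_of_ne_finset_zero (s := F) fun x hx => by rw [hF x hx, abs_zero]
    have hNd : (0:ℝ) < (N:ℝ)^d := by
      have : (0:ℝ) < N := by exact_mod_cast hN1
      positivity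
    have htermb : ∀ x : Fin d → ℤ,
        |g (pt d N x) * g (pt d N (x - z))| ≤ |g (pt d N x)| * C := by
      intro x
      rw [abs_mul]
      exact mul_le_mul_of_nonneg_left (by simpa [Real.norm_eq_abs] using hC (pt d N (x - z)))
        (abs_nonneg _)
    have hsn : Summable fun x : Fin d → ℤ => |g (pt d N x) * g (pt d N (x - z))| :=
      Summable.of_nonneg_of_le (fun x => abs_nonneg _) htermb (hsumabs.mul_right C)
    have hAb : |A N z| ≤ (∑' x : Fin d → ℤ, |g (pt d N x)|) * C := by
      have h0 := norm_tsum_le_tsum_norm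
        (f := fun x : Fin d → ℤ => g (pt d N x) * g (pt d N (x - z)))
        (by simpa only [Real.norm_eq_abs] using hsn)
      simp only [Real.norm_eq_abs] at h0
      calc |A N z| ≤ ∑' x : Fin d → ℤ, |g (pt d N x) * g (pt d N (x - z))| := h0
        _ ≤ ∑' x : Fin d → ℤ, |g (pt d N x)| * C := Summable.tsum_le_tsum htermb hsn (hsumabs.mul_right C)
        _ = (∑' x : Fin d → ℤ, |g (pt d N x)|) * C := tsum_mul_right
    rw [Real.norm_eq_abs, abs_mul, abs_mul, abs_of_pos (show (0:ℝ) < 1/(N:ℝ)^d by positivity)]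
    apply mul_le_mul_of_nonneg_left _ (abs_nonneg _)
    calc 1/(N:ℝ)^d * |A N z|
        ≤ 1/(N:ℝ)^d * ((∑' x : Fin d → ℤ, |g (pt d N x)|) * C) :=
          mul_le_mul_of_nonneg_left hAb (by positivity)
      _ = (1/(N:ℝ)^d * ∑' x : Fin d → ℤ, |g (pt d N x)|) * C := by ring
      _ ≤ M * C := mul_le_mul_of_nonneg_right hQN.le hC0
      _ = C * M := mul_comm _ _
  have hDCT := tendsto_tsum_of_dominated_convergence (hK.mul_right (C * M)) hFz hbound
  have hlim : (∑' z : Fin d → ℤ, K z * ∫ y : Fin d → ℝ, g y ^ 2)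
      = (∑' z : Fin d → ℤ, K z) * ∫ y : EuclideanSpace ℝ (Fin d), V y ^ 2 := by
    rw [tsum_mul_right, hI]
  rw [hlim] at hDCT
  apply hDCT.congr'
  filter_upwards [eventually_ge_atTop 1] with N hN1
  obtain ⟨F, hF⟩ := exists_finsupp g hgc hN1
  have hsumabs : Summable fun x : Fin d → ℤ => |g (pt d N x)| :=
    summable_of_ne_finset_zero (s := F) fun x hx => by rw [hF x hx, abs_zero]
  set G : (Fin d → ℤ) × (Fin d → ℤ) → ℝ :=
    fun q => g (pt d N q.1) * K (q.1 - q.2) * g (pt d N q.2) with hG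
  set φ : ((Fin d → ℤ) × (Fin d → ℤ)) ≃ ((Fin d → ℤ) × (Fin d → ℤ)) :=
    { toFun := fun p => (p.2, p.2 - p.1)
      invFun := fun q => (q.1 - q.2, q.1)
      left_inv := fun p => by simp
      right_inv := fun q => by simp } with hφ
  have hφapp : ∀ p : (Fin d → ℤ) × (Fin d → ℤ),
      G (φ p) = g (pt d N p.2) * K p.1 * g (pt d N (p.2 - p.1)) := by
    intro p
    simp only [hG, hφ, Equiv.coe_fn_mk, sub_sub_cancel]
  have hGφ : Summable fun p : (Fin d → ℤ) × (Fin d → ℤ) => G (φ p) := by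
    have hnonneg1 : 0 ≤ fun z : Fin d → ℤ => |K z| := fun z => abs_nonneg _
    have hnonneg2 : 0 ≤ fun x : Fin d → ℤ => C * |g (pt d N x)| :=
      fun x => mul_nonneg hC0 (abs_nonneg _)
    have hprod : Summable fun p : (Fin d → ℤ) × (Fin d → ℤ) =>
        |K p.1| * (C * |g (pt d N p.2)|) :=
      Summable.mul_of_nonneg hK (hsumabs.mul_left C) hnonneg1 hnonneg2
    refine Summable.of_norm_bounded hprod ?_
    intro p
    rw [hφapp p, Real.norm_eq_abs, abs_mul, abs_mul]
    calc |g (pt d N p.2)| * |K p.1| * |g (pt d N (p.2 - p.1))|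
        ≤ |g (pt d N p.2)| * |K p.1| * C := by
          apply mul_le_mul_of_nonneg_left _ (mul_nonneg (abs_nonneg _) (abs_nonneg _))
          simpa [Real.norm_eq_abs] using hC (pt d N (p.2 - p.1))
      _ = |K p.1| * (C * |g (pt d N p.2)|) := by ring
  have hrow : ∀ z : Fin d → ℤ, Summable fun x : Fin d → ℤ => G (φ (z, x)) := by
    intro z
    apply summable_of_ne_finset_zero (s := F)
    intro x hx
    rw [hφapp (z, x)]
    rw [hF x hx, zero_mul, zero_mul]
  have key : (∑' p : (Fin d → ℤ) × (Fin d → ℤ),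
      V (latE d N p.1) * K (p.1 - p.2) * V (latE d N p.2)) = ∑' z : Fin d → ℤ, K z * A N z := by
    have e0 : (∑' p : (Fin d → ℤ) × (Fin d → ℤ),
        V (latE d N p.1) * K (p.1 - p.2) * V (latE d N p.2)) = ∑' q, G q := rfl
    rw [e0, ← φ.tsum_eq G, Summable.tsum_prod' hGφ hrow]
    refine tsum_congr fun z => ?_
    rw [hA]
    rw [← tsum_mul_left]
    refine tsum_congr fun x => ?_
    rw [hφapp (z, x)]
    ring
  rw [key, ← tsum_mul_left]
  refine tsum_congr fun z => ?_
  ring
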